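/- Let T be a finite set and a_t an integer for each t in T. Then there exists a finite subset S of ℤ containing no two consecutive integers such that for every integer n satisfying n > max({-a_t : t ∈ T} ∪ {-s : s ∈ S}), one has ∑_{t∈T} f_{n+a_t} = ∑_{s∈S} f_{n+s}. -/

import Mathlib

/-- Fibonacci numbers indexed by integers, extended by zero on nonpositives. -/
def fibZ (m : ℤ) : ℕ := Nat.fib m.toNat

namespace GZ

def fibI : ℤ → ℤ
  | Int.ofNat n => Nat.fib n
  | Int.negSucc n => (-1)^n * Nat.fib (n+1)

@[simp] lemma fibI_natCast (n : ℕ) : fibI (n : ℤ) = Nat.fib n := rfl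

lemma fibI_recur (z : ℤ) : fibI (z + 2) = fibI (z + 1) + fibI z := by
  match z with
  | Int.ofNat n =>
    have e2 : (Int.ofNat n) + 2 = ((n+2 : ℕ) : ℤ) := by push_cast; simp
    have e1 : (Int.ofNat n) + 1 = ((n+1 : ℕ) : ℤ) := by push_cast; simp
    have e0 : (Int.ofNat n) = ((n : ℕ) : ℤ) := rfl
    rw [e2, e1, e0, fibI_natCast, fibI_natCast, fibI_natCast]
    rw [Nat.fib_add_two]; push_cast; ring
  | Int.negSucc 0 => decide
  | Int.negSucc 1 => decide
  | Int.negSucc (m+2) =>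
    have e2 : Int.negSucc (m+2) + 2 = Int.negSucc m := by
      rw [Int.negSucc_eq, Int.negSucc_eq]; push_cast; ring
    have e1 : Int.negSucc (m+2) + 1 = Int.negSucc (m+1) := by
      rw [Int.negSucc_eq, Int.negSucc_eq]; push_cast; ring
    rw [e2, e1]
    show ((-1:ℤ))^m * Nat.fib (m+1) = (-1)^(m+1) * Nat.fib (m+2) + (-1)^(m+2) * Nat.fib (m+3)
    have h3 : (Nat.fib (m+3) : ℤ) = Nat.fib (m+1) + Nat.fib (m+2) := by
      have : Nat.fib (m+3) = Nat.fib (m+1) + Nat.fib (m+2) := Nat.fib_add_two (n := m+1)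
      exact_mod_cast this
    rw [h3]; ring

lemma int_ind (P : ℤ → Prop) (h0 : P 0) (h1 : P 1)
    (hup : ∀ z, P z → P (z+1) → P (z+2))
    (hdn : ∀ z, P (z+1) → P (z+2) → P z) : ∀ z, P z := by
  have hnat : ∀ n : ℕ, P n ∧ P ((n:ℤ)+1) := by
    intro n
    induction n with
    | zero => exact ⟨by simpa using h0, by simpa using h1⟩
    | succ m ih =>
      refine ⟨by exact_mod_cast ih.2, ?_⟩
      have h2 := hup m ih.1 ih.2
      have e : ((m:ℤ)+2) = ((m+1 : ℕ):ℤ) + 1 := by push_cast; ring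
      rwa [e] at h2
  have hneg : ∀ n : ℕ, P (-(n:ℤ)) ∧ P (-(n:ℤ)+1) := by
    intro n
    induction n with
    | zero => exact ⟨by simpa using h0, by simpa using h1⟩
    | succ m ih =>
      have hz1 : -((m:ℤ)+1) + 1 = -(m:ℤ) := by ring
      have hz2 : -((m:ℤ)+1) + 2 = -(m:ℤ)+1 := by ring
      have hd := hdn (-((m:ℤ)+1)) (by rw [hz1]; exact ih.1) (by rw [hz2]; exact ih.2)
      constructor
      · have hc : -(((m+1:ℕ)):ℤ) = -((m:ℤ)+1) := by push_cast; ring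
        rw [hc]; exact hd
      · have hc : -(((m+1:ℕ)):ℤ) + 1 = -(m:ℤ) := by push_cast; ring
        rw [hc]; exact ih.1
  intro z
  rcases le_or_gt 0 z with hz | hz
  · have e : z = (z.toNat : ℤ) := (Int.toNat_of_nonneg hz).symm
    rw [e]; exact (hnat z.toNat).1
  · have e : z = -(((-z).toNat : ℕ) : ℤ) := by omega
    rw [e]; exact (hneg _).1

lemma fibI_add (s n : ℤ) :
    fibI (n + s) = fibI s * fibI (n + 1) + fibI (s - 1) * fibI n := by
  induction s using int_ind with
  | h0 =>
    have e0 : fibI 0 = 0 := rfl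
    have em : fibI (0-1) = 1 := by decide
    rw [add_zero, e0, em]; ring
  | h1 =>
    have e1 : fibI 1 = 1 := rfl
    have e0 : fibI (1-1) = 0 := by decide
    rw [e1, e0]; ring
  | hup z ih ih1 =>
    have e := fibI_recur (n + z)
    have i1 := ih1
    have i0 := ih
    have r := fibI_recur (z-1)
    rw [show z-1+2 = z+1 by ring, show z-1+1 = z by ring] at r
    rw [show n + (z+2) = n+z+2 by ring, show z+2-1 = z+1 by ring, e, fibI_recur z]
    rw [show z+1-1 = z by ring] at i1
    rw [show n + (z+1) = n + z + 1 by ring] at i1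
    linear_combination i1 + i0 - r * fibI n
  | hdn z ih1 ih2 =>
    have e := fibI_recur (n + z)
    have r2 := fibI_recur z
    have r1 := fibI_recur (z-1)
    rw [show z-1+2 = z+1 by ring, show z-1+1 = z by ring] at r1
    rw [show n + (z+1) = n+z+1 by ring, show z+1-1 = z by ring] at ih1
    rw [show n + (z+2) = n+z+2 by ring, show z+2-1 = z+1 by ring] at ih2
    linear_combination ih2 - ih1 - e + fibI (n+1) * r2 + fibI n * r1
  

lemma abs_fibI (z : ℤ) : |fibI z| = (Nat.fib z.natAbs : ℤ) := by
  match z with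
  | Int.ofNat n =>
    show |(Nat.fib n : ℤ)| = _
    simp [Int.natAbs_natCast]
  | Int.negSucc n =>
    show |(-1:ℤ)^n * Nat.fib (n+1)| = _
    rw [abs_mul, abs_pow, abs_neg, abs_one, one_pow, one_mul]
    simp [Int.natAbs_negSucc]

lemma fibZ_cast {m : ℤ} (h : 0 ≤ m) : ((Nat.fib m.toNat : ℕ) : ℤ) = fibI m := by
  lift m to ℕ using h
  simp

lemma add_one_le_fib (n : ℕ) : n + 1 ≤ Nat.fib (n + 2) := by
  induction n with
  | zero => simp
  | succ m ih =>
    have h1 : 1 ≤ Nat.fib (m + 1) := Nat.fib_pos.mpr (by omega)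
    have h2 := Nat.fib_add_two (n := m + 1)
    have h3 : Nat.fib (m + 1 + 1) = Nat.fib (m + 2) := rfl
    omega

lemma sum_range_fib (n : ℕ) : (∑ i ∈ Finset.range n, Nat.fib i) + 1 = Nat.fib (n+1) := by
  induction n with
  | zero => simp
  | succ m ih =>
    rw [Finset.sum_range_succ]
    have h2 := Nat.fib_add_two (n := m)
    have h3 : Nat.fib (m + 1 + 1) = Nat.fib (m + 2) := rfl
    omega

lemma mul_fib_lt (k m : ℕ) (hm : 1 ≤ m) : k * Nat.fib m < Nat.fib (m + (2*k+1)) := by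
  induction k with
  | zero => simpa using Nat.fib_pos.mpr (show 0 < m + 1 by omega)
  | succ j ih =>
    have h1 : Nat.fib m ≤ Nat.fib (m + (2*j+2)) := Nat.fib_mono (by omega)
    have h2 : Nat.fib (m + (2*j+1)) + Nat.fib (m + (2*j+2)) = Nat.fib (m + (2*(j+1)+1)) := by
      rw [show m + (2*(j+1)+1) = (m + (2*j+1)) + 2 by ring, Nat.fib_add_two,
        show m + (2*j+1) + 1 = m + (2*j+2) by ring]
    have : (j+1) * Nat.fib m = j * Nat.fib m + Nat.fib m := by ring
    omega

lemma holey_sum : ∀ m : ℕ, ∀ W : Finset ℕ, (∀ j ∈ W, 1 ≤ j ∧ j ≤ m) →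
    (∀ j ∈ W, j + 1 ∉ W) → ∑ j ∈ W, Nat.fib j ≤ Nat.fib (m+1) := by
  intro m
  induction m using Nat.strong_induction_on with
  | _ m IH =>
    intro W hbd hhol
    match m with
    | 0 =>
      have : W = ∅ := Finset.eq_empty_of_forall_notMem (fun j hj => by
        have := hbd j hj; omega)
      simp [this]
    | m+1 =>
      by_cases hm : m + 1 ∈ W
      · have hsum : ∑ j ∈ W, Nat.fib j = Nat.fib (m+1) + ∑ j ∈ W.erase (m+1), Nat.fib j :=
          (Finset.add_sum_erase _ _ hm).symm
        have hW' : ∀ j ∈ W.erase (m+1), 1 ≤ j ∧ j ≤ m - 1 := by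
          intro j hj
          have hj1 := Finset.mem_of_mem_erase hj
          have hj2 := Finset.ne_of_mem_erase hj
          have := hbd j hj1
          have hne : j ≠ m := by
            rintro rfl
            exact (hhol j hj1) hm
          omega
        have hrec := IH (m-1) (by omega) (W.erase (m+1)) hW'
          (fun j hj => fun hc => hhol j (Finset.mem_of_mem_erase hj) (Finset.mem_of_mem_erase hc))
        match m, hm, hsum, hW', hrec with
        | 0, hm, hsum, hW', hrec =>
          have hW1 : W = {1} := by
            apply Finset.eq_singleton_iff_unique_mem.mpr
            exact ⟨hm, fun j hj => by have := hbd j hj; omega⟩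
          simp [hW1]
        | m+1, hm, hsum, hW', hrec =>
          have hle1 : Nat.fib (m+1-1+1) ≤ Nat.fib (m+1) := Nat.fib_mono (by omega)
          have h2 := Nat.fib_add_two (n := m+1)
          have h3 : Nat.fib (m+1+1+1) = Nat.fib (m+1+2) := rfl
          omega
      · have hW' : ∀ j ∈ W, 1 ≤ j ∧ j ≤ m := by
          intro j hj
          have := hbd j hj
          have : j ≠ m + 1 := fun hc => hm (hc ▸ hj)
          omega
        have h1 := IH m (by omega) W hW' hhol
        have h2 : Nat.fib (m+1) ≤ Nat.fib (m+1+1) := Nat.fib_mono (by omega)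
        omega

lemma zeck : ∀ V : ℕ, ∃ Z : Finset ℕ, (∀ i ∈ Z, 2 ≤ i) ∧ (∀ i ∈ Z, i + 1 ∉ Z) ∧
    ∑ i ∈ Z, Nat.fib i = V := by
  intro V
  induction V using Nat.strong_induction_on with
  | _ V IH =>
    rcases Nat.eq_zero_or_pos V with h0 | hpos
    · exact ⟨∅, by simp, by simp, by simp [h0]⟩
    · set D : Finset ℕ := (Finset.range (V+2)).filter (fun i => 2 ≤ i ∧ Nat.fib i ≤ V) with hD
      have hne : D.Nonempty := ⟨2, by simp [hD]; omega⟩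
      set I := D.max' hne with hI
      have hImem : I ∈ D := D.max'_mem hne
      have hI2 : 2 ≤ I := by
        have := Finset.mem_filter.mp hImem
        exact this.2.1
      have hIle : Nat.fib I ≤ V := (Finset.mem_filter.mp hImem).2.2
      have hIfib : 1 ≤ Nat.fib I := Nat.fib_pos.mpr (by omega)
      have hmax : ∀ j ∈ D, j ≤ I := fun j hj => D.le_max' j hj
      -- remainder bound
      have hr : V - Nat.fib I < Nat.fib (I - 1) := by
        by_contra hc
        push_neg at hc
        have hfib : Nat.fib (I+1) = Nat.fib I + Nat.fib (I-1) := by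
          rw [show I + 1 = (I-1) + 2 by omega, Nat.fib_add_two,
            show I - 1 + 1 = I by omega]
          omega
        have hle : Nat.fib (I+1) ≤ V := by omega
        have hIV : I ≤ V := by
          have hA := add_one_le_fib (I-1)
          rw [show I - 1 + 2 = I + 1 by omega] at hA
          omega
        have : I + 1 ∈ D := by
          rw [hD]
          refine Finset.mem_filter.mpr ⟨Finset.mem_range.mpr (by omega), by omega, hle⟩
        have := hmax _ this
        omega
      set r := V - Nat.fib I with hrdef
      have hrV : r < V := by omega
      obtain ⟨Z', h2', hhol', hsum'⟩ := IH r hrV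
      have hlt : ∀ j ∈ Z', j < I - 1 := by
        intro j hj
        by_contra hc
        push_neg at hc
        have h1 : Nat.fib j ≤ r := hsum' ▸ Finset.single_le_sum (f := Nat.fib)
          (fun _ _ => Nat.zero_le _) hj
        have h2 : Nat.fib (I-1) ≤ Nat.fib j := Nat.fib_mono hc
        omega
      refine ⟨insert I Z', ?_, ?_, ?_⟩
      · intro i hi
        rcases Finset.mem_insert.mp hi with rfl | hi'
        · exact hI2
        · exact h2' i hi'
      · intro i hi
        rcases Finset.mem_insert.mp hi with rfl | hi'
        · intro hc
          rcases Finset.mem_insert.mp hc with he | hc'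
          · omega
          · have := hlt _ hc'; omega
        · intro hc
          rcases Finset.mem_insert.mp hc with he | hc'
          · have := hlt _ hi'; omega
          · exact hhol' i hi' hc'
      · have hnotmem : I ∉ Z' := fun hc => by have := hlt _ hc; omega
        rw [Finset.sum_insert hnotmem, hsum']
        omega

end GZ

open GZ Finset in
theorem generalized_zeckendorf_existence {α : Type*} (T : Finset α) (a : α → ℤ) :
    ∃ S : Finset ℤ, (∀ s ∈ S, s + 1 ∉ S) ∧
      ∀ n : ℤ, (∀ t ∈ T, -a t < n) → (∀ s ∈ S, -s < n) →
        ∑ t ∈ T, fibZ (n + a t) = ∑ s ∈ S, fibZ (n + s) := by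
  classical
  set k := T.card with hk
  set A0 : ℕ := T.sup (fun t => (a t).toNat) with hA0
  set Bneg : ℕ := T.sup (fun t => (-(a t)).toNat) with hBneg
  set Cb : ℕ := ∑ t ∈ T, Nat.fib ((a t - 1).natAbs) with hCb
  set C : ℕ := A0 + 2*k + 1 with hC
  obtain ⟨bigN, hbigN⟩ : ∃ b : ℕ, b = Bneg + C + Nat.fib (C+1) + Cb + 4 := ⟨_, rfl⟩
  have hbigN4 : Bneg + C + Nat.fib (C+1) + Cb + 4 ≤ bigN := le_of_eq hbigN.symm
  set N : ℤ := (bigN : ℤ) with hN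
  have haN : ∀ t ∈ T, 1 ≤ N + a t := by
    intro t ht
    have h1 : -(a t) ≤ ((-(a t)).toNat : ℤ) := Int.self_le_toNat _
    have h2 : ((-(a t)).toNat : ℤ) ≤ (Bneg : ℤ) := by
      exact_mod_cast Finset.le_sup (f := fun t => (-(a t)).toNat) ht
    have h3 : (Bneg : ℤ) + 4 ≤ (bigN : ℤ) := by exact_mod_cast by omega
    rw [hN]; omega
  set V : ℕ := ∑ t ∈ T, fibZ (N + a t) with hV
  have hVlt : V < Nat.fib (bigN + C) := by
    have hle : V ≤ k * Nat.fib (bigN + A0) := by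
      rw [hV]
      calc ∑ t ∈ T, fibZ (N + a t) ≤ ∑ _t ∈ T, Nat.fib (bigN + A0) := by
            apply Finset.sum_le_sum
            intro t ht
            apply Nat.fib_mono
            have h1 : a t ≤ ((a t).toNat : ℤ) := Int.self_le_toNat _
            have h2 : ((a t).toNat : ℤ) ≤ (A0 : ℤ) := by
              exact_mod_cast Finset.le_sup (f := fun t => (a t).toNat) ht
            have : N + a t ≤ ((bigN + A0 : ℕ) : ℤ) := by push_cast; rw [hN] at *; omega
            omega
        _ = k * Nat.fib (bigN + A0) := by rw [Finset.sum_const, smul_eq_mul, hk]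
    have hlt := mul_fib_lt k (bigN + A0) (by omega)
    have : bigN + A0 + (2*k+1) = bigN + C := by rw [hC]; ring
    rw [this] at hlt
    omega
  obtain ⟨Z, hZ2, hZhole, hZsum⟩ := zeck V
  have hZub : ∀ i ∈ Z, i < bigN + C := by
    intro i hi
    by_contra hcon
    push_neg at hcon
    have h1 : Nat.fib i ≤ V := hZsum ▸ Finset.single_le_sum (f := Nat.fib)
      (fun _ _ => Nat.zero_le _) hi
    have h2 : Nat.fib (bigN + C) ≤ Nat.fib i := Nat.fib_mono hcon
    omega
  set S : Finset ℤ := Z.image (fun i : ℕ => (i:ℤ) - N) with hS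
  have hinj : ∀ x ∈ Z, ∀ y ∈ Z, (x:ℤ) - N = (y:ℤ) - N → x = y := by
    intro x _ y _ h; omega
  set A : ℤ := ∑ t ∈ T, fibI (a t) with hA
  set B : ℤ := ∑ t ∈ T, fibI (a t - 1) with hB
  set A' : ℤ := ∑ i ∈ Z, fibI ((i:ℤ) - N) with hA'
  set B' : ℤ := ∑ i ∈ Z, fibI ((i:ℤ) - N - 1) with hB'
  -- generic expansion of fibZ-sums
  have expandT : ∀ n : ℤ, (∀ t ∈ T, 0 ≤ n + a t) →
      (∑ t ∈ T, (fibZ (n + a t) : ℤ)) = A * fibI (n+1) + B * fibI n := by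
    intro n hn
    calc ∑ t ∈ T, (fibZ (n + a t) : ℤ)
        = ∑ t ∈ T, (fibI (a t) * fibI (n+1) + fibI (a t - 1) * fibI n) := by
          apply Finset.sum_congr rfl
          intro t ht
          rw [show (fibZ (n + a t) : ℤ) = fibI (n + a t) from fibZ_cast (hn t ht)]
          exact fibI_add (a t) n
      _ = A * fibI (n+1) + B * fibI n := by
          rw [Finset.sum_add_distrib, hA, hB, Finset.sum_mul, Finset.sum_mul]
  have expandZ : ∀ n : ℤ, (∀ i ∈ Z, 0 ≤ n + ((i:ℤ) - N)) →
      (∑ i ∈ Z, (fibZ (n + ((i:ℤ) - N)) : ℤ)) = A' * fibI (n+1) + B' * fibI n := by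
    intro n hn
    calc ∑ i ∈ Z, (fibZ (n + ((i:ℤ) - N)) : ℤ)
        = ∑ i ∈ Z, (fibI ((i:ℤ) - N) * fibI (n+1) + fibI ((i:ℤ) - N - 1) * fibI n) := by
          apply Finset.sum_congr rfl
          intro i hi
          rw [show (fibZ (n + ((i:ℤ) - N)) : ℤ) = fibI (n + ((i:ℤ) - N)) from fibZ_cast (hn i hi)]
          exact fibI_add ((i:ℤ) - N) n
      _ = A' * fibI (n+1) + B' * fibI n := by
          rw [Finset.sum_add_distrib, hA', hB', Finset.sum_mul, Finset.sum_mul]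
  -- the two representations of V
  have hVA : (V : ℤ) = A * fibI (N+1) + B * fibI N := by
    have h1 : (V:ℤ) = ∑ t ∈ T, (fibZ (N + a t) : ℤ) := by rw [hV]; push_cast; rfl
    rw [h1]; exact expandT N (fun t ht => by have := haN t ht; omega)
  have hVZ : (V : ℤ) = A' * fibI (N+1) + B' * fibI N := by
    have h1 : (V:ℤ) = ∑ i ∈ Z, (fibZ (N + ((i:ℤ) - N)) : ℤ) := by
      rw [← hZsum]; push_cast
      apply Finset.sum_congr rfl
      intro i _
      rw [show N + ((i:ℤ) - N) = (i:ℤ) by ring]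
      simp [fibZ]
    rw [h1]
    exact expandZ N (fun i hi => by have := hZ2 i hi; omega)
  have hkey : (A - A') * fibI (N+1) = (B' - B) * fibI N := by linear_combination hVZ - hVA
  -- cast identifications
  have hfibN : fibI N = (Nat.fib bigN : ℤ) := by rw [hN, fibI_natCast]
  have hfibN1 : fibI (N+1) = (Nat.fib (bigN+1) : ℤ) := by
    rw [show N + 1 = ((bigN + 1 : ℕ) : ℤ) by rw [hN]; push_cast; ring, fibI_natCast]
  -- bounds
  have hBb : |B| ≤ (Cb : ℤ) := by
    rw [hB, hCb]
    calc |∑ t ∈ T, fibI (a t - 1)| ≤ ∑ t ∈ T, |fibI (a t - 1)| :=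
          Finset.abs_sum_le_sum_abs _ _
      _ = ∑ t ∈ T, ((Nat.fib ((a t - 1).natAbs) : ℤ)) :=
          Finset.sum_congr rfl (fun t _ => abs_fibI _)
      _ = ((∑ t ∈ T, Nat.fib ((a t - 1).natAbs) : ℕ) : ℤ) := by push_cast; rfl
  have hB'b : |B'| ≤ (Nat.fib bigN : ℤ) + (Nat.fib (C+1) : ℤ) := by
    have h1 : |B'| ≤ ∑ i ∈ Z, ((Nat.fib (((i:ℤ) - N - 1).natAbs) : ℤ)) := by
      rw [hB']
      calc |∑ i ∈ Z, fibI ((i:ℤ) - N - 1)| ≤ ∑ i ∈ Z, |fibI ((i:ℤ) - N - 1)| :=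
            Finset.abs_sum_le_sum_abs _ _
        _ = _ := Finset.sum_congr rfl (fun i _ => abs_fibI _)
    have h2 : ∑ i ∈ Z, Nat.fib (((i:ℤ) - N - 1).natAbs) ≤ Nat.fib bigN + Nat.fib (C+1) := by
      rw [← Finset.sum_filter_add_sum_filter_not Z (fun i => i ≤ bigN)]
      have hlo : ∑ i ∈ Z.filter (fun i => i ≤ bigN), Nat.fib (((i:ℤ) - N - 1).natAbs)
          ≤ Nat.fib bigN := by
        have he : ∀ i ∈ Z.filter (fun i => i ≤ bigN),
            Nat.fib (((i:ℤ) - N - 1).natAbs) = Nat.fib (bigN + 1 - i) := by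
          intro i hi
          have hi' := Finset.mem_filter.mp hi
          congr 1
          rw [hN]
          omega
        rw [Finset.sum_congr rfl he]
        have him : ∑ j ∈ (Z.filter (fun i => i ≤ bigN)).image (fun i => bigN + 1 - i), Nat.fib j
            = ∑ i ∈ Z.filter (fun i => i ≤ bigN), Nat.fib (bigN + 1 - i) :=
          Finset.sum_image (by
            intro x hx y hy hxy
            have hx' := Finset.mem_filter.mp hx
            have hy' := Finset.mem_filter.mp hy
            have := hZ2 x hx'.1
            have := hZ2 y hy'.1
            simp only at hxy
            omega)
        rw [← him]
        have := holey_sum (bigN - 1) ((Z.filter (fun i => i ≤ bigN)).image (fun i => bigN + 1 - i))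
          (by intro j hj
              obtain ⟨i, hi, rfl⟩ := Finset.mem_image.mp hj
              have hi' := Finset.mem_filter.mp hi
              have := hZ2 i hi'.1
              omega)
          (by intro j hj hj1
              obtain ⟨i, hi, hij⟩ := Finset.mem_image.mp hj
              obtain ⟨i2, hi2, hij2⟩ := Finset.mem_image.mp hj1
              have hi' := Finset.mem_filter.mp hi
              have hi2' := Finset.mem_filter.mp hi2
              have h2i := hZ2 i hi'.1
              have h2i2 := hZ2 i2 hi2'.1
              have : i = i2 + 1 := by omega
              exact hZhole i2 hi2'.1 (this ▸ hi'.1))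
        rwa [show bigN - 1 + 1 = bigN by omega] at this
      have hhi : ∑ i ∈ Z.filter (fun i => ¬ i ≤ bigN), Nat.fib (((i:ℤ) - N - 1).natAbs)
          ≤ Nat.fib (C+1) := by
        have he : ∀ i ∈ Z.filter (fun i => ¬ i ≤ bigN),
            Nat.fib (((i:ℤ) - N - 1).natAbs) = Nat.fib (i - (bigN + 1)) := by
          intro i hi
          have hi' := Finset.mem_filter.mp hi
          congr 1
          rw [hN]
          simp at hi'
          omega
        rw [Finset.sum_congr rfl he]
        have him : ∑ j ∈ (Z.filter (fun i => ¬ i ≤ bigN)).image (fun i => i - (bigN+1)), Nat.fib j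
            = ∑ i ∈ Z.filter (fun i => ¬ i ≤ bigN), Nat.fib (i - (bigN+1)) :=
          Finset.sum_image (by
            intro x hx y hy hxy
            have hx' := Finset.mem_filter.mp hx
            have hy' := Finset.mem_filter.mp hy
            simp at hx' hy'
            simp only at hxy
            omega)
        rw [← him]
        have hsub : (Z.filter (fun i => ¬ i ≤ bigN)).image (fun i => i - (bigN+1))
            ⊆ Finset.range C := by
          intro j hj
          obtain ⟨i, hi, rfl⟩ := Finset.mem_image.mp hj
          have hi' := Finset.mem_filter.mp hi
          have := hZub i hi'.1
          simp at hi' ⊢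
          omega
        calc ∑ j ∈ (Z.filter (fun i => ¬ i ≤ bigN)).image (fun i => i - (bigN+1)), Nat.fib j
            ≤ ∑ j ∈ Finset.range C, Nat.fib j :=
              Finset.sum_le_sum_of_subset hsub
          _ ≤ Nat.fib (C+1) := by have := sum_range_fib C; omega
      omega
    calc |B'| ≤ ∑ i ∈ Z, ((Nat.fib (((i:ℤ) - N - 1).natAbs) : ℤ)) := h1
      _ = ((∑ i ∈ Z, Nat.fib (((i:ℤ) - N - 1).natAbs) : ℕ) : ℤ) := by push_cast; rfl
      _ ≤ (Nat.fib bigN : ℤ) + (Nat.fib (C+1) : ℤ) := by exact_mod_cast h2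
  -- conclude B' = B
  have hBB' : B' = B := by
    have hco : IsCoprime (fibI (N+1)) (fibI N) := by
      rw [hfibN, hfibN1]
      rw [Nat.isCoprime_iff_coprime]
      exact (Nat.fib_coprime_fib_succ bigN).symm
    have hdvd : fibI (N+1) ∣ (B' - B) * fibI N :=
      ⟨A - A', by linear_combination -hkey⟩
    have hdvd2 : fibI (N+1) ∣ (B' - B) := hco.dvd_of_dvd_mul_right hdvd
    have hsize : |B' - B| < fibI (N+1) := by
      have hf1 : Nat.fib (C+1) + Cb + 2 ≤ Nat.fib (bigN - 1) := by
        have hA1 := add_one_le_fib (bigN - 3)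
        rw [show bigN - 3 + 2 = bigN - 1 by omega] at hA1
        omega
      have hf2 : Nat.fib (bigN - 1) + Nat.fib bigN = Nat.fib (bigN + 1) := by
        rw [show bigN + 1 = (bigN - 1) + 2 by omega, Nat.fib_add_two,
          show bigN - 1 + 1 = bigN by omega]
      rw [hfibN1]
      have habs : |B' - B| ≤ |B'| + |B| := abs_sub _ _
      have hcast1 : ((Nat.fib (C+1) : ℕ) : ℤ) + ((Cb : ℕ) : ℤ) + 2 ≤ ((Nat.fib (bigN-1) : ℕ) : ℤ) := by
        exact_mod_cast hf1
      have hcast2 : ((Nat.fib (bigN-1) : ℕ) : ℤ) + ((Nat.fib bigN : ℕ) : ℤ) = ((Nat.fib (bigN+1) : ℕ) : ℤ) := by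
        exact_mod_cast hf2
      omega
    have := Int.eq_zero_of_abs_lt_dvd hdvd2 hsize
    omega
  have hAA' : A' = A := by
    have h0 : (A - A') * fibI (N+1) = 0 := by rw [hkey, hBB']; ring
    have hpos : fibI (N+1) ≠ 0 := by
      rw [hfibN1]
      exact_mod_cast (Nat.fib_pos.mpr (show 0 < bigN + 1 by omega)).ne'
    have := mul_eq_zero.mp h0
    rcases this with h | h
    · omega
    · exact absurd h hpos
  -- finish
  refine ⟨S, ?_, ?_⟩
  · intro s hs hs1
    rw [hS] at hs hs1
    obtain ⟨i, hi, rfl⟩ := Finset.mem_image.mp hs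
    obtain ⟨i2, hi2, he⟩ := Finset.mem_image.mp hs1
    have : i2 = i + 1 := by omega
    exact hZhole i hi (this ▸ hi2)
  · intro n hTn hSn
    have hTn' : ∀ t ∈ T, 0 ≤ n + a t := fun t ht => by have := hTn t ht; omega
    have hSn' : ∀ i ∈ Z, 0 ≤ n + ((i:ℤ) - N) := by
      intro i hi
      have hmem : (i:ℤ) - N ∈ S := by
        rw [hS]; exact Finset.mem_image.mpr ⟨i, hi, rfl⟩
      have := hSn _ hmem
      omega
    have hfinal : (∑ t ∈ T, (fibZ (n + a t) : ℤ)) = ∑ s ∈ S, (fibZ (n + s) : ℤ) := by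
      have him2 : ∑ s ∈ Z.image (fun i : ℕ => (i:ℤ) - N), (fibZ (n + s) : ℤ)
          = ∑ i ∈ Z, (fibZ (n + ((i:ℤ) - N)) : ℤ) := Finset.sum_image hinj
      rw [expandT n hTn', hAA'.symm, hBB'.symm, ← expandZ n hSn', hS]
      exact him2.symm
    exact_mod_cast hfinal
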